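/- Let v ∈ R^N with all entries positive, ν_i = 1/v_i, and Σ* = diag(v) + 1_N 1_N^T. Fix 1 ≤ M < N and Δ_1,...,Δ_M ∈ R. Let Δ̄ = (Σ_{i=1}^M ν_i Δ_i)/(1 + Σ_{i=1}^M ν_i). Then the minimizer Δ of Δ^T Σ*^{-1} Δ over vectors whose first M coordinates are Δ_1,...,Δ_M has Δ_j = Δ̄ for all j = M+1,...,N, and 1_N^T Σ*^{-1} Δ = Δ̄. -/

import Mathlib

open Matrix

namespace BaselineAux

variable {n : Type*} [Fintype n] [DecidableEq n]

noncomputable def sig (v : n → ℝ) : ℝ := 1 + ∑ i, (v i)⁻¹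

noncomputable def Sinv (v : n → ℝ) : Matrix n n ℝ :=
  Matrix.of fun i j => (if i = j then (v i)⁻¹ else 0) - (v i)⁻¹ * (v j)⁻¹ / sig v

omit [DecidableEq n] in
lemma sum_inv_nonneg (v : n → ℝ) (hv : ∀ i, 0 < v i) : (0:ℝ) ≤ ∑ i, (v i)⁻¹ :=
  Finset.sum_nonneg fun i _ => inv_nonneg.2 (hv i).le

omit [DecidableEq n] in
lemma sig_pos (v : n → ℝ) (hv : ∀ i, 0 < v i) : 0 < sig v := by
  have := sum_inv_nonneg v hv; unfold sig; linarith

lemma S_mul_Sinv (v : n → ℝ) (hv : ∀ i, 0 < v i) :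
    (Matrix.diagonal v + Matrix.of fun _ _ => (1:ℝ)) * Sinv v = 1 := by
  have hσ : sig v ≠ 0 := (sig_pos v hv).ne'
  ext i k
  have hvi : v i * (v i)⁻¹ = 1 := mul_inv_cancel₀ (hv i).ne'
  have hsum : ∑ j, Sinv v j k = (v k)⁻¹ - (∑ j, (v j)⁻¹) * (v k)⁻¹ / sig v := by
    unfold Sinv
    simp only [Matrix.of_apply]
    rw [Finset.sum_sub_distrib, Finset.sum_ite_eq' Finset.univ k fun j => (v j)⁻¹]
    simp [Finset.sum_div, Finset.sum_mul]
  rw [Matrix.add_mul, Matrix.add_apply, Matrix.diagonal_mul, Matrix.mul_apply]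
  simp only [Matrix.of_apply, one_mul]
  rw [hsum]
  have hS : ∑ j, (v j)⁻¹ = sig v - 1 := by unfold sig; ring
  rw [hS]
  unfold Sinv
  simp only [Matrix.of_apply, Matrix.one_apply]
  have hvik : v k ≠ 0 := (hv k).ne'
  have hvne : v i ≠ 0 := (hv i).ne'
  by_cases h : i = k
  · subst h
    simp only [if_pos rfl, eq_self_iff_true, if_true, ↓reduceIte]
    field_simp
    ring
  · simp only [if_neg h]
    field_simp
    ring

lemma Sinv_mulVec (v : n → ℝ) (x : n → ℝ) (i : n) :
    (Sinv v *ᵥ x) i = (v i)⁻¹ * x i - (v i)⁻¹ * (∑ j, (v j)⁻¹ * x j) / sig v := by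
  unfold Sinv
  rw [Matrix.mulVec, dotProduct]
  simp only [Matrix.of_apply, sub_mul, ite_mul, zero_mul]
  rw [Finset.sum_sub_distrib, Finset.sum_ite_eq Finset.univ i fun j => (v i)⁻¹ * x j]
  simp only [Finset.mem_univ, if_pos]
  congr 1
  conv_rhs => rw [Finset.mul_sum, Finset.sum_div]
  exact Finset.sum_congr rfl fun j _ => by ring

lemma dot_Sinv (v : n → ℝ) (x y : n → ℝ) :
    y ⬝ᵥ (Sinv v *ᵥ x) =
      (∑ i, (v i)⁻¹ * x i * y i)
        - (∑ i, (v i)⁻¹ * x i) * (∑ i, (v i)⁻¹ * y i) / sig v := by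
  rw [dotProduct]
  simp only [Sinv_mulVec]
  rw [Finset.sum_congr rfl (fun i _ => mul_sub (y i) _ _), Finset.sum_sub_distrib]
  congr 1
  · exact Finset.sum_congr rfl fun i _ => by ring
  · conv_rhs => rw [Finset.mul_sum, Finset.sum_div]
    exact Finset.sum_congr rfl fun i _ => by ring

lemma quad_eq (v : n → ℝ) (x : n → ℝ) :
    x ⬝ᵥ (Sinv v *ᵥ x) =
      (∑ i, (v i)⁻¹ * x i ^ 2) - (∑ i, (v i)⁻¹ * x i) ^ 2 / sig v := by
  rw [dot_Sinv]
  congr 1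
  · exact Finset.sum_congr rfl fun i _ => by ring
  · ring

lemma quad_ge (v : n → ℝ) (hv : ∀ i, 0 < v i) (x : n → ℝ) :
    (∑ i, (v i)⁻¹ * x i ^ 2) / sig v ≤ x ⬝ᵥ (Sinv v *ᵥ x) := by
  have hσ := sig_pos v hv
  have hcs : (∑ i, (v i)⁻¹ * x i) ^ 2 ≤ (sig v - 1) * ∑ i, (v i)⁻¹ * x i ^ 2 := by
    have h := Finset.sum_mul_sq_le_sq_mul_sq Finset.univ
      (fun i => Real.sqrt (v i)⁻¹) (fun i => Real.sqrt (v i)⁻¹ * x i)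
    have e1 : ∀ i : n, Real.sqrt (v i)⁻¹ * (Real.sqrt (v i)⁻¹ * x i) = (v i)⁻¹ * x i := by
      intro i
      rw [← mul_assoc, Real.mul_self_sqrt (inv_nonneg.2 (hv i).le)]
    have e2 : ∀ i : n, (Real.sqrt (v i)⁻¹) ^ 2 = (v i)⁻¹ := fun i =>
      Real.sq_sqrt (inv_nonneg.2 (hv i).le)
    have e3 : ∀ i : n, (Real.sqrt (v i)⁻¹ * x i) ^ 2 = (v i)⁻¹ * x i ^ 2 := by
      intro i; rw [mul_pow, e2 i]
    have hS : ∑ i, (v i)⁻¹ = sig v - 1 := by unfold sig; ring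
    rw [← hS]
    simpa only [e1, e2, e3] using h
  rw [quad_eq, div_le_iff₀ hσ, sub_mul, div_mul_cancel₀ _ hσ.ne']
  nlinarith [Finset.sum_nonneg (fun i (_ : i ∈ Finset.univ) =>
    mul_nonneg (inv_nonneg.2 (hv i).le) (sq_nonneg (x i)))]

lemma quad_nonneg (v : n → ℝ) (hv : ∀ i, 0 < v i) (x : n → ℝ) :
    0 ≤ x ⬝ᵥ (Sinv v *ᵥ x) := by
  refine le_trans ?_ (quad_ge v hv x)
  exact div_nonneg (Finset.sum_nonneg fun i _ =>
    mul_nonneg (inv_nonneg.2 (hv i).le) (sq_nonneg _)) (sig_pos v hv).le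

lemma eq_zero_of_quad_nonpos (v : n → ℝ) (hv : ∀ i, 0 < v i) (x : n → ℝ)
    (h : x ⬝ᵥ (Sinv v *ᵥ x) ≤ 0) : ∀ i, x i = 0 := by
  have hge := quad_ge v hv x
  have hσ := sig_pos v hv
  have hQnn : (0:ℝ) ≤ ∑ i, (v i)⁻¹ * x i ^ 2 :=
    Finset.sum_nonneg fun i _ => mul_nonneg (inv_nonneg.2 (hv i).le) (sq_nonneg _)
  have hzero : ∑ i, (v i)⁻¹ * x i ^ 2 = 0 := by
    have h1 : (∑ i, (v i)⁻¹ * x i ^ 2) / sig v ≤ 0 := le_trans hge h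
    have h2 : (0:ℝ) ≤ (∑ i, (v i)⁻¹ * x i ^ 2) / sig v := div_nonneg hQnn hσ.le
    have h3 : (∑ i, (v i)⁻¹ * x i ^ 2) / sig v = 0 := le_antisymm h1 h2
    exact (div_eq_zero_iff.1 h3).resolve_right hσ.ne'
  intro i
  have hterm := (Finset.sum_eq_zero_iff_of_nonneg (fun i (_ : i ∈ Finset.univ) =>
    mul_nonneg (inv_nonneg.2 (hv i).le) (sq_nonneg (x i)))).1 hzero i (Finset.mem_univ i)
  have hvi : (v i)⁻¹ ≠ 0 := inv_ne_zero (hv i).ne'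
  have hx2 : x i ^ 2 = 0 := (mul_eq_zero.1 hterm).resolve_left hvi
  exact pow_eq_zero_iff (n := 2) (by norm_num) |>.1 hx2

lemma quad_expand (v : n → ℝ) (x y : n → ℝ) :
    (x + y) ⬝ᵥ (Sinv v *ᵥ (x + y)) =
      x ⬝ᵥ (Sinv v *ᵥ x) + y ⬝ᵥ (Sinv v *ᵥ y) + 2 * (y ⬝ᵥ (Sinv v *ᵥ x)) := by
  have e1 : ∑ i, (v i)⁻¹ * (x + y) i ^ 2
      = (∑ i, (v i)⁻¹ * x i ^ 2) + ((∑ i, (v i)⁻¹ * y i ^ 2)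
        + ∑ i, 2 * ((v i)⁻¹ * x i * y i)) := by
    rw [← Finset.sum_add_distrib, ← Finset.sum_add_distrib]
    refine Finset.sum_congr rfl fun i _ => ?_
    simp only [Pi.add_apply]; ring
  have e2 : ∑ i, (v i)⁻¹ * (x + y) i
      = (∑ i, (v i)⁻¹ * x i) + ∑ i, (v i)⁻¹ * y i := by
    rw [← Finset.sum_add_distrib]
    refine Finset.sum_congr rfl fun i _ => ?_
    simp only [Pi.add_apply]; ring
  have e3 : ∑ i, 2 * ((v i)⁻¹ * x i * y i) = 2 * ∑ i, (v i)⁻¹ * x i * y i := by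
    rw [Finset.mul_sum]
  rw [quad_eq, quad_eq, quad_eq, dot_Sinv, e1, e2, e3]
  ring

end BaselineAux
open BaselineAux in
/-- Baseline characterization (Theorem 1(i)): for `Σ* = diag(v) + 1 1ᵀ`, the minimizer of
`Δᵀ Σ*⁻¹ Δ` over vectors with fixed first `M` coordinates `Δ_1, …, Δ_M` has all remaining
coordinates equal to `Δ̄ = (Σ ν_i Δ_i)/(1 + Σ ν_i)`, and `1ᵀ Σ*⁻¹ Δ = Δ̄`. -/
theorem baseline_characterization {M L : ℕ} (hM : 0 < M) (hL : 0 < L)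
    (v : Fin M ⊕ Fin L → ℝ) (hv : ∀ i, 0 < v i) (Δt : Fin M → ℝ) :
    let S : Matrix (Fin M ⊕ Fin L) (Fin M ⊕ Fin L) ℝ :=
      Matrix.diagonal v + Matrix.of (fun _ _ => (1 : ℝ))
    let Δbar : ℝ :=
      (∑ i, (v (Sum.inl i))⁻¹ * Δt i) / (1 + ∑ i, (v (Sum.inl i))⁻¹)
    (∃ Δ : Fin M ⊕ Fin L → ℝ,
      (∀ i, Δ (Sum.inl i) = Δt i) ∧
      (∀ Δ' : Fin M ⊕ Fin L → ℝ, (∀ i, Δ' (Sum.inl i) = Δt i) →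
        Δ ⬝ᵥ (S⁻¹ *ᵥ Δ) ≤ Δ' ⬝ᵥ (S⁻¹ *ᵥ Δ'))) ∧
    (∀ Δ : Fin M ⊕ Fin L → ℝ,
      (∀ i, Δ (Sum.inl i) = Δt i) →
      (∀ Δ' : Fin M ⊕ Fin L → ℝ, (∀ i, Δ' (Sum.inl i) = Δt i) →
        Δ ⬝ᵥ (S⁻¹ *ᵥ Δ) ≤ Δ' ⬝ᵥ (S⁻¹ *ᵥ Δ')) →
      (∀ j, Δ (Sum.inr j) = Δbar) ∧
      (fun _ => (1 : ℝ)) ⬝ᵥ (S⁻¹ *ᵥ Δ) = Δbar) := by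
  intro S Δbar
  have hSinv : S⁻¹ = Sinv v := Matrix.inv_eq_right_inv (S_mul_Sinv v hv)
  have hσ : 0 < sig v := sig_pos v hv
  have hF : (0:ℝ) < 1 + ∑ i, (v (Sum.inl i))⁻¹ := by
    have : (0:ℝ) ≤ ∑ i : Fin M, (v (Sum.inl i))⁻¹ :=
      Finset.sum_nonneg fun i _ => inv_nonneg.2 (hv _).le
    linarith
  set Δs : Fin M ⊕ Fin L → ℝ := Sum.elim Δt (fun _ => Δbar) with hΔs
  have hΔsl : ∀ i, Δs (Sum.inl i) = Δt i := fun i => rfl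
  -- T(Δs) = sig v * Δbar
  have hA : Δbar * (1 + ∑ i, (v (Sum.inl i))⁻¹) = ∑ i, (v (Sum.inl i))⁻¹ * Δt i :=
    div_mul_cancel₀ _ hF.ne'
  have hT : ∑ i, (v i)⁻¹ * Δs i = sig v * Δbar := by
    unfold sig
    rw [Fintype.sum_sum_type, Fintype.sum_sum_type]
    simp only [hΔs, Sum.elim_inl, Sum.elim_inr]
    rw [show ∑ j : Fin L, (v (Sum.inr j))⁻¹ * Δbar
        = (∑ j : Fin L, (v (Sum.inr j))⁻¹) * Δbar from (Finset.sum_mul _ _ _).symm]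
    linear_combination -hA
  -- cross term vanishes against vectors supported on inr
  have hB0 : ∀ y : Fin M ⊕ Fin L → ℝ, (∀ i, y (Sum.inl i) = 0) →
      y ⬝ᵥ (Sinv v *ᵥ Δs) = 0 := by
    intro y hy
    rw [dot_Sinv, hT]
    have hTy : ∑ i, (v i)⁻¹ * y i = ∑ j : Fin L, (v (Sum.inr j))⁻¹ * y (Sum.inr j) := by
      rw [Fintype.sum_sum_type]
      simp [hy]
    have hXY : ∑ i, (v i)⁻¹ * Δs i * y i
        = Δbar * ∑ j : Fin L, (v (Sum.inr j))⁻¹ * y (Sum.inr j) := by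
      rw [Fintype.sum_sum_type]
      simp only [hΔs, Sum.elim_inl, Sum.elim_inr, hy, mul_zero, zero_mul,
        Finset.sum_const_zero, zero_add]
      rw [Finset.mul_sum]
      exact Finset.sum_congr rfl fun j _ => by ring
    rw [hTy, hXY]
    field_simp
    ring
  -- minimality of Δs
  have hmin : ∀ Δ' : Fin M ⊕ Fin L → ℝ, (∀ i, Δ' (Sum.inl i) = Δt i) →
      Δs ⬝ᵥ (Sinv v *ᵥ Δs) ≤ Δ' ⬝ᵥ (Sinv v *ᵥ Δ') := by
    intro Δ' h'
    have hdec : Δ' = Δs + (Δ' - Δs) := by funext i; simp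
    have hy : ∀ i, (Δ' - Δs) (Sum.inl i) = 0 := by
      intro i; simp [h' i, hΔsl i]
    calc Δs ⬝ᵥ (Sinv v *ᵥ Δs)
        ≤ Δs ⬝ᵥ (Sinv v *ᵥ Δs) + (Δ' - Δs) ⬝ᵥ (Sinv v *ᵥ (Δ' - Δs)) := by
          have := quad_nonneg v hv (Δ' - Δs); linarith
      _ = Δ' ⬝ᵥ (Sinv v *ᵥ Δ') := by
          conv_rhs => rw [hdec]
          rw [quad_expand, hB0 _ hy]
          ring
  refine ⟨⟨Δs, hΔsl, by simpa [hSinv] using hmin⟩, ?_⟩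
  intro Δ hΔl hΔmin
  have hle : Δ ⬝ᵥ (Sinv v *ᵥ Δ) ≤ Δs ⬝ᵥ (Sinv v *ᵥ Δs) := by
    have := hΔmin Δs hΔsl
    simpa [hSinv] using this
  have hy : ∀ i, (Δ - Δs) (Sum.inl i) = 0 := by
    intro i; simp [hΔl i, hΔsl i]
  have hdec : Δ = Δs + (Δ - Δs) := by funext i; simp
  have hsplit : Δ ⬝ᵥ (Sinv v *ᵥ Δ)
      = Δs ⬝ᵥ (Sinv v *ᵥ Δs) + (Δ - Δs) ⬝ᵥ (Sinv v *ᵥ (Δ - Δs)) := by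
    conv_lhs => rw [hdec]
    rw [quad_expand, hB0 _ hy]
    ring
  have hq0 : (Δ - Δs) ⬝ᵥ (Sinv v *ᵥ (Δ - Δs)) ≤ 0 := by linarith
  have hzero := eq_zero_of_quad_nonpos v hv _ hq0
  have hΔeq : Δ = Δs := by
    funext i
    have := hzero i
    have : Δ i - Δs i = 0 := this
    linarith
  constructor
  · intro j
    rw [hΔeq]; rfl
  · rw [hSinv, hΔeq, dot_Sinv, hT]
    have h1 : ∑ i : Fin M ⊕ Fin L, (v i)⁻¹ * (1:ℝ) = sig v - 1 := by
      unfold sig; simp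
    have h2 : ∑ i : Fin M ⊕ Fin L, (v i)⁻¹ * Δs i * (fun _ => (1:ℝ)) i = sig v * Δbar := by
      simpa using hT
    rw [show (∑ i : Fin M ⊕ Fin L, (v i)⁻¹ * (fun _ => (1:ℝ)) i) = sig v - 1 from h1, h2]
    field_simp
    ring
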